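/- Let φ be a unit vector in H_R ⊆ H_S ⊗ H_E and let X_R be an operator on H_R with 0 ≤ X_R ≤ 𝟙. Define |φ̃⟩ = √(X_R)|φ⟩, ρ_S = Tr_E(|φ⟩⟨φ|), and ρ̃_S = Tr_E(|φ̃⟩⟨φ̃|). Then ‖ρ_S − ρ̃_S‖₁ ≤ 2√(1 − ⟨φ|X_R|φ⟩). -/

import Mathlib

open Matrix MeasureTheory
open scoped ComplexOrder Kronecker

/-- The positive semidefinite square root of a positive semidefinite matrix
(the definition `Matrix.PosSemidef.sqrt` of the older Mathlib, since removed). -/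
noncomputable def Matrix.PosSemidef.sqrt {n : Type*} [Fintype n] [DecidableEq n]
    {𝕜 : Type*} [RCLike 𝕜] {A : Matrix n n 𝕜} (hA : A.PosSemidef) : Matrix n n 𝕜 :=
  hA.1.eigenvectorUnitary.1 * diagonal ((↑) ∘ (√·) ∘ hA.1.eigenvalues) *
  (star hA.1.eigenvectorUnitary : Matrix n n 𝕜)

/-- The trace norm `‖M‖₁ = Tr √(M†M)` of a complex matrix. -/
noncomputable def traceNorm {n : Type*} [Fintype n] [DecidableEq n]
    (M : Matrix n n ℂ) : ℝ :=
  ((Matrix.posSemidef_conjTranspose_mul_self M).sqrt).trace.re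

/-- The Hilbert–Schmidt norm `‖M‖₂ = √(Tr (M†M))`. -/
noncomputable def hsNorm {n : Type*} [Fintype n] (M : Matrix n n ℂ) : ℝ :=
  Real.sqrt ((Mᴴ * M).trace.re)

/-- Euclidean norm of a vector. -/
noncomputable def vnorm {n : Type*} [Fintype n] (φ : n → ℂ) : ℝ :=
  Real.sqrt (∑ i, Complex.normSq (φ i))

/-- Inner product `⟨φ|ψ⟩`. -/
noncomputable def cinner {n : Type*} [Fintype n] (φ ψ : n → ℂ) : ℂ := ∑ i, star (φ i) * ψ i

/-- Outer product `|φ⟩⟨φ|`. -/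
noncomputable def outer {n : Type*} (φ : n → ℂ) : Matrix n n ℂ :=
  Matrix.of fun i j => φ i * star (φ j)

/-- Partial trace over the environment (second factor). -/
noncomputable def ptraceE {dS dE : ℕ} (M : Matrix (Fin dS × Fin dE) (Fin dS × Fin dE) ℂ) :
    Matrix (Fin dS) (Fin dS) ℂ :=
  Matrix.of fun s s' => ∑ e, M (s, e) (s', e)

/-- Partial trace over the system (first factor). -/
noncomputable def ptraceS {dS dE : ℕ} (M : Matrix (Fin dS × Fin dE) (Fin dS × Fin dE) ℂ) :
    Matrix (Fin dE) (Fin dE) ℂ :=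
  Matrix.of fun e e' => ∑ s, M (s, e) (s, e')

/-- The swap (flip) operator `F(|a⟩⊗|b⟩) = |b⟩⊗|a⟩` as a matrix. -/
noncomputable def swapMatrix (d : ℕ) : Matrix (Fin d × Fin d) (Fin d × Fin d) ℂ :=
  Matrix.of fun p q => if p.1 = q.2 ∧ p.2 = q.1 then 1 else 0

/-- `μ` is the uniform (Haar, unitarily invariant) probability measure on the unit
sphere of the subspace given by the orthogonal projection `P`: it is a probability
measure, concentrated on unit vectors of the range of `P`, and invariant under every
unitary commuting with `P` (i.e. preserving the subspace). -/
def IsUniformOnSphere {ι : Type*} [Fintype ι] [DecidableEq ι]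
    (P : Matrix ι ι ℂ) (μ : Measure (ι → ℂ)) : Prop :=
  IsProbabilityMeasure μ ∧
  μ {φ | P.mulVec φ = φ ∧ vnorm φ = 1} = 1 ∧
  ∀ U ∈ Matrix.unitaryGroup ι ℂ, U * P = P * U →
    Measure.map (fun φ => U.mulVec φ) μ = μ

set_option linter.unusedSectionVars false

theorem Matrix.IsHermitian.star_mul_self_mul_eq_diagonal {n : Type*} [Fintype n] [DecidableEq n]
    {A : Matrix n n ℂ} (hA : A.IsHermitian) :
    (star (hA.eigenvectorUnitary : Matrix n n ℂ)) * A * (hA.eigenvectorUnitary : Matrix n n ℂ)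
      = diagonal (RCLike.ofReal ∘ hA.eigenvalues) := by
  have := hA.conjStarAlgAut_star_eigenvectorUnitary
  simpa [Unitary.conjStarAlgAut_apply, Unitary.coe_star] using this

theorem Matrix.PosSemidef.posSemidef_sqrt {n : Type*} [Fintype n] [DecidableEq n]
    {A : Matrix n n ℂ} (hA : A.PosSemidef) : hA.sqrt.PosSemidef := by
  rw [Matrix.PosSemidef.sqrt, Matrix.star_eq_conjTranspose]
  refine Matrix.PosSemidef.mul_mul_conjTranspose_same ?_ _
  refine Matrix.posSemidef_diagonal_iff.mpr fun j => ?_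
  simp only [Function.comp_apply]
  exact Complex.zero_le_real.mpr (Real.sqrt_nonneg _)

theorem Matrix.PosSemidef.sqrt_mul_self {n : Type*} [Fintype n] [DecidableEq n]
    {A : Matrix n n ℂ} (hA : A.PosSemidef) : hA.sqrt * hA.sqrt = A := by
  have hU : (star (hA.1.eigenvectorUnitary : Matrix n n ℂ)) * (hA.1.eigenvectorUnitary : Matrix n n ℂ) = 1 :=
    Unitary.coe_star_mul_self _
  have hD : diagonal (((↑) ∘ (√·) ∘ hA.1.eigenvalues : n → ℂ)) * diagonal ((↑) ∘ (√·) ∘ hA.1.eigenvalues)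
      = diagonal (RCLike.ofReal ∘ hA.1.eigenvalues : n → ℂ) := by
    rw [diagonal_mul_diagonal]; congr 1; funext i
    simp only [Function.comp_apply]
    rw [← Complex.ofReal_mul, Real.mul_self_sqrt (hA.eigenvalues_nonneg i)]
    rfl
  conv_rhs => rw [hA.1.spectral_theorem, Unitary.conjStarAlgAut_apply, ← hD]
  rw [Matrix.PosSemidef.sqrt]
  simp only [Matrix.mul_assoc]
  rw [← Matrix.mul_assoc (star (hA.1.eigenvectorUnitary : Matrix n n ℂ)), hU, Matrix.one_mul]
  rfl

namespace MDAux

variable {n : Type*} [Fintype n] [DecidableEq n]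

/-- contraction in the ℓ² sense -/
def IsCtr (C : Matrix n n ℂ) : Prop :=
  ∀ x : n → ℂ, ∑ i, Complex.normSq ((C *ᵥ x) i) ≤ ∑ i, Complex.normSq (x i)

lemma conj_mul_self_sum (y : n → ℂ) :
    ∑ i, (starRingEnd ℂ) (y i) * y i = ((∑ i, Complex.normSq (y i) : ℝ) : ℂ) := by
  push_cast
  exact Finset.sum_congr rfl fun i _ => (Complex.normSq_eq_conj_mul_self).symm

lemma dot_conjT_mul (N : Matrix n n ℂ) (x : n → ℂ) :
    star x ⬝ᵥ ((Nᴴ * N) *ᵥ x) = ((∑ i, Complex.normSq ((N *ᵥ x) i) : ℝ) : ℂ) := by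
  rw [← mulVec_mulVec, dotProduct_mulVec, ← star_mulVec, ← conjTranspose_conjTranspose N,
    ← conj_mul_self_sum]
  simp [dotProduct, Pi.star_apply]

lemma normSq_mulVec (N : Matrix n n ℂ) (x : n → ℂ) :
    ∑ i, Complex.normSq ((N *ᵥ x) i) = (star x ⬝ᵥ ((Nᴴ * N) *ᵥ x)).re := by
  rw [dot_conjT_mul]; simp

/-- quadratic form of `V * diagonal f * Vᴴ`. -/
lemma qf_vdv (V : Matrix n n ℂ) (f : n → ℝ) (x : n → ℂ) :
    star x ⬝ᵥ ((V * diagonal (fun i => (f i : ℂ)) * Vᴴ) *ᵥ x)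
      = ∑ i, ((f i : ℂ) * ((Complex.normSq ((Vᴴ *ᵥ x) i) : ℝ) : ℂ)) := by
  rw [← mulVec_mulVec, ← mulVec_mulVec, dotProduct_mulVec (star x) V]
  have h1 : star x ᵥ* V = star (Vᴴ *ᵥ x) := by
    rw [star_mulVec, conjTranspose_conjTranspose]
  rw [h1]
  simp only [dotProduct, mulVec_diagonal, Pi.star_apply, Complex.star_def]
  refine Finset.sum_congr rfl fun i _ => ?_
  rw [Complex.normSq_eq_conj_mul_self]
  ring

lemma qf_vdv_re (V : Matrix n n ℂ) (f : n → ℝ) (x : n → ℂ) :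
    (star x ⬝ᵥ ((V * diagonal (fun i => (f i : ℂ)) * Vᴴ) *ᵥ x)).re
      = ∑ i, f i * Complex.normSq ((Vᴴ *ᵥ x) i) := by
  rw [qf_vdv]
  rw [Complex.re_sum]
  refine Finset.sum_congr rfl fun i _ => ?_
  rw [← Complex.ofReal_mul]
  simp

/-- Cauchy–Schwarz for `cinner`-style sums. -/
lemma abs_sum_conj_mul_le (a b : n → ℂ) :
    ‖∑ i, (starRingEnd ℂ) (a i) * b i‖
      ≤ Real.sqrt (∑ i, Complex.normSq (a i)) * Real.sqrt (∑ i, Complex.normSq (b i)) := by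
  calc ‖∑ i, (starRingEnd ℂ) (a i) * b i‖
      ≤ ∑ i, ‖(starRingEnd ℂ) (a i) * b i‖ := by
        exact norm_sum_le _ _
    _ = ∑ i, ‖a i‖ * ‖b i‖ := by
        refine Finset.sum_congr rfl fun i _ => ?_
        rw [norm_mul, Complex.norm_conj]
    _ ≤ Real.sqrt (∑ i, ‖a i‖ ^ 2) * Real.sqrt (∑ i, ‖b i‖ ^ 2) :=
        Real.sum_mul_le_sqrt_mul_sqrt _ _ _
    _ = Real.sqrt (∑ i, Complex.normSq (a i)) * Real.sqrt (∑ i, Complex.normSq (b i)) := by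
        simp_rw [Complex.sq_norm]

lemma traceNorm_eq_sum_sqrt (M : Matrix n n ℂ) :
    traceNorm M = ∑ i, Real.sqrt ((Matrix.posSemidef_conjTranspose_mul_self M).1.eigenvalues i) := by
  set h := Matrix.posSemidef_conjTranspose_mul_self M
  rw [traceNorm, Matrix.PosSemidef.sqrt, Matrix.trace_mul_cycle]
  rw [Unitary.coe_star_mul_self h.1.eigenvectorUnitary, one_mul, Matrix.trace_diagonal]
  rw [Complex.re_sum]
  simp

end MDAux
set_option linter.unusedSectionVars false

namespace MDAux
variable {n : Type*} [Fintype n] [DecidableEq n]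

lemma trace_conjT_mul (A B : Matrix n n ℂ) :
    (Aᴴ * B).trace = ∑ i, ∑ k, (starRingEnd ℂ) (A k i) * B k i := by
  simp [Matrix.trace, Matrix.mul_apply, Matrix.conjTranspose_apply, Matrix.diag]

lemma col_mul_eq_mulVec (C V : Matrix n n ℂ) (i k : n) :
    (C * V) k i = (C *ᵥ (fun j => V j i)) k := by
  simp [Matrix.mul_apply, Matrix.mulVec, dotProduct]

lemma dual_le (M C : Matrix n n ℂ) (hC : IsCtr C) :
    ((Cᴴ * M).trace).re ≤ traceNorm M := by
  set h := Matrix.posSemidef_conjTranspose_mul_self M with hh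
  set V : Matrix n n ℂ := (h.1.eigenvectorUnitary : Matrix n n ℂ) with hV
  have hsVV : star V * V = 1 := Unitary.coe_star_mul_self h.1.eigenvectorUnitary
  have hVsV : V * star V = 1 := Unitary.coe_mul_star_self h.1.eigenvectorUnitary
  -- rotate the trace
  have key : (Cᴴ * M).trace = ((C * V)ᴴ * (M * V)).trace := by
    have e : (C * V)ᴴ * (M * V) = star V * (Cᴴ * M) * V := by
      rw [Matrix.conjTranspose_mul, ← Matrix.star_eq_conjTranspose V]
      noncomm_ring
    rw [e, Matrix.trace_mul_cycle, ← Matrix.mul_assoc, hVsV, Matrix.one_mul]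
  -- column norms of C * V are ≤ 1
  have hcolC : ∀ i, ∑ k, Complex.normSq ((C * V) k i) ≤ 1 := by
    intro i
    have h1 : ∑ k, Complex.normSq ((C * V) k i) = ∑ k, Complex.normSq ((C *ᵥ (fun j => V j i)) k) := by
      refine Finset.sum_congr rfl fun k _ => by rw [col_mul_eq_mulVec]
    have h2 : ∑ k, Complex.normSq (V k i) = 1 := by
      have : (star V * V) i i = 1 := by rw [hsVV]; simp
      have e : (star V * V) i i = ((∑ k, Complex.normSq (V k i) : ℝ) : ℂ) := by
        rw [Matrix.mul_apply]
        rw [← conj_mul_self_sum]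
        simp [Matrix.star_apply, Complex.star_def]
      rw [e] at this
      exact_mod_cast this
    rw [h1]
    calc _ ≤ ∑ k, Complex.normSq (V k i) := hC _
      _ = 1 := h2
  -- column norms of M * V are eigenvalues
  have hcolM : ∀ i, ∑ k, Complex.normSq ((M * V) k i) = h.1.eigenvalues i := by
    intro i
    have e1 : ((M * V)ᴴ * (M * V)) i i = ((∑ k, Complex.normSq ((M * V) k i) : ℝ) : ℂ) := by
      rw [Matrix.mul_apply, ← conj_mul_self_sum]
      simp [Matrix.conjTranspose_apply, Complex.star_def]
    have e2 : (M * V)ᴴ * (M * V) = diagonal (RCLike.ofReal ∘ h.1.eigenvalues) := by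
      calc (M * V)ᴴ * (M * V) = star V * (Mᴴ * M) * V := by
            rw [Matrix.conjTranspose_mul, ← Matrix.star_eq_conjTranspose V]
            noncomm_ring
        _ = _ := h.1.star_mul_self_mul_eq_diagonal
    rw [e2] at e1
    have : ((h.1.eigenvalues i : ℝ) : ℂ) = ((∑ k, Complex.normSq ((M * V) k i) : ℝ) : ℂ) := by
      rw [← e1]; simp
    exact_mod_cast this.symm
  rw [key, trace_conjT_mul, Complex.re_sum, traceNorm_eq_sum_sqrt]
  refine Finset.sum_le_sum fun i _ => ?_
  calc (∑ k, (starRingEnd ℂ) ((C * V) k i) * (M * V) k i).re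
      ≤ ‖∑ k, (starRingEnd ℂ) ((C * V) k i) * (M * V) k i‖ := Complex.re_le_norm _
    _ ≤ Real.sqrt (∑ k, Complex.normSq ((C * V) k i)) * Real.sqrt (∑ k, Complex.normSq ((M * V) k i)) :=
        abs_sum_conj_mul_le _ _
    _ ≤ 1 * Real.sqrt (h.1.eigenvalues i) := by
        rw [hcolM]
        refine mul_le_mul_of_nonneg_right ?_ (Real.sqrt_nonneg _)
        exact Real.sqrt_le_one.mpr (by simpa using (hcolC i))
    _ = Real.sqrt (h.1.eigenvalues i) := one_mul _

end MDAux

namespace MDAux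
variable {n : Type*} [Fintype n] [DecidableEq n]

lemma attain (M : Matrix n n ℂ) :
    ∃ C : Matrix n n ℂ, IsCtr C ∧ ((Cᴴ * M).trace).re = traceNorm M := by
  set h := Matrix.posSemidef_conjTranspose_mul_self M with hh
  set V : Matrix n n ℂ := (h.1.eigenvectorUnitary : Matrix n n ℂ) with hV
  set lam : n → ℝ := h.1.eigenvalues with hlam
  have hlam0 : ∀ i, 0 ≤ lam i := fun i => h.eigenvalues_nonneg i
  have hsVV : star V * V = 1 := Unitary.coe_star_mul_self h.1.eigenvectorUnitary
  have hVsV : V * star V = 1 := Unitary.coe_mul_star_self h.1.eigenvectorUnitary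
  have hdiag : star V * (Mᴴ * M) * V = diagonal (fun i => ((lam i : ℝ) : ℂ)) := by
    have := h.1.star_mul_self_mul_eq_diagonal
    convert this using 2
    rfl
  set g : n → ℝ := fun i => if lam i = 0 then 0 else (Real.sqrt (lam i))⁻¹ with hg
  set W : Matrix n n ℂ := V * diagonal (fun i => (g i : ℂ)) * Vᴴ with hW
  refine ⟨M * W, ?_, ?_⟩
  · -- contraction
    have hCC : (M * W)ᴴ * (M * W)
        = V * diagonal (fun i => (((if lam i = 0 then 0 else 1 : ℝ)) : ℂ)) * Vᴴ := by
      have e1 : (M * W)ᴴ * (M * W) = W * ((Mᴴ * M) * W) := by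
        rw [Matrix.conjTranspose_mul, hW, Matrix.conjTranspose_mul, Matrix.conjTranspose_mul]
        simp only [Matrix.conjTranspose_conjTranspose, Matrix.diagonal_conjTranspose]
        have : star (fun i => ((g i : ℝ) : ℂ)) = fun i => ((g i : ℝ) : ℂ) := by
          funext i; simp [Pi.star_apply]
        rw [this]
        noncomm_ring
      rw [e1, hW]
      have e2 : (Mᴴ * M) * (V * diagonal (fun i => (g i : ℂ)) * Vᴴ)
          = V * (diagonal (fun i => ((lam i : ℝ) : ℂ)) * diagonal (fun i => (g i : ℂ))) * Vᴴ := by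
        have : Mᴴ * M = V * diagonal (fun i => ((lam i : ℝ) : ℂ)) * star V := by
          have h2 := hdiag
          calc Mᴴ * M = (V * star V) * (Mᴴ * M) * (V * star V) := by rw [hVsV]; noncomm_ring
            _ = V * (star V * (Mᴴ * M) * V) * star V := by noncomm_ring
            _ = _ := by rw [h2]
        rw [this, Matrix.star_eq_conjTranspose]
        have hVV' : Vᴴ * V = 1 := by rw [← Matrix.star_eq_conjTranspose]; exact hsVV
        calc V * diagonal (fun i => ((lam i : ℝ) : ℂ)) * Vᴴ * (V * diagonal (fun i => (g i : ℂ)) * Vᴴ)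
            = V * diagonal (fun i => ((lam i : ℝ) : ℂ)) * (Vᴴ * V) * diagonal (fun i => (g i : ℂ)) * Vᴴ := by
              noncomm_ring
          _ = _ := by rw [hVV']; noncomm_ring
      rw [e2]
      have hVV' : Vᴴ * V = 1 := by rw [← Matrix.star_eq_conjTranspose]; exact hsVV
      have hgg : diagonal (fun i => (g i : ℂ)) * (diagonal (fun i => ((lam i : ℝ) : ℂ)) * diagonal (fun i => (g i : ℂ)))
          = diagonal (fun i => (((if lam i = 0 then 0 else 1 : ℝ)) : ℂ)) := by
        rw [Matrix.diagonal_mul_diagonal]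
        rw [Matrix.diagonal_mul_diagonal]
        apply congrArg diagonal
        funext i
        by_cases hi : lam i = 0
        · simp [hg, hi]
        · have hs : Real.sqrt (lam i) ≠ 0 := by
            simp only [ne_eq, Real.sqrt_eq_zero', not_le]
            exact lt_of_le_of_ne (hlam0 i) (Ne.symm hi)
          have hr : (Real.sqrt (lam i))⁻¹ * (lam i * (Real.sqrt (lam i))⁻¹) = 1 := by
            rw [← Real.mul_self_sqrt (hlam0 i)]
            field_simp
            rw [Real.sqrt_sq (Real.sqrt_nonneg _)]
          simp only [hg, hi, if_false]
          rw [show ((((Real.sqrt (lam i))⁻¹ : ℝ)) : ℂ) * (((lam i : ℝ) : ℂ) * (((Real.sqrt (lam i))⁻¹ : ℝ) : ℂ))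
              = ((((Real.sqrt (lam i))⁻¹ * (lam i * (Real.sqrt (lam i))⁻¹)) : ℝ) : ℂ) by push_cast; ring, hr]
      calc (V * diagonal (fun i => (g i : ℂ)) * Vᴴ) * (V * (diagonal (fun i => ((lam i : ℝ) : ℂ)) * diagonal (fun i => (g i : ℂ))) * Vᴴ)
          = V * (diagonal (fun i => (g i : ℂ)) * (Vᴴ * V) * (diagonal (fun i => ((lam i : ℝ) : ℂ)) * diagonal (fun i => (g i : ℂ)))) * Vᴴ := by
            noncomm_ring
        _ = V * (diagonal (fun i => (g i : ℂ)) * (diagonal (fun i => ((lam i : ℝ) : ℂ)) * diagonal (fun i => (g i : ℂ)))) * Vᴴ := by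
            rw [hVV']; noncomm_ring
        _ = _ := by rw [hgg]
    intro x
    rw [normSq_mulVec, hCC, qf_vdv_re]
    have hone : ∑ i, Complex.normSq ((Vᴴ *ᵥ x) i) = ∑ i, Complex.normSq (x i) := by
      rw [normSq_mulVec]
      have : Vᴴᴴ * Vᴴ = 1 := by
        rw [Matrix.conjTranspose_conjTranspose, ← Matrix.star_eq_conjTranspose]; exact hVsV
      rw [this, Matrix.one_mulVec]
      have e : star x ⬝ᵥ x = ((∑ i, Complex.normSq (x i) : ℝ) : ℂ) := by
        rw [← conj_mul_self_sum]
        simp [dotProduct, Pi.star_apply, Complex.star_def]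
      rw [e]; simp
    calc ∑ i, (if lam i = 0 then (0:ℝ) else 1) * Complex.normSq ((Vᴴ *ᵥ x) i)
        ≤ ∑ i, Complex.normSq ((Vᴴ *ᵥ x) i) := by
          refine Finset.sum_le_sum fun i _ => ?_
          by_cases hi : lam i = 0 <;> simp [hi, Complex.normSq_nonneg]
      _ = _ := hone
  · -- value
    have eC : (M * W)ᴴ * M = W * (Mᴴ * M) := by
      rw [Matrix.conjTranspose_mul]
      have hWH : Wᴴ = W := by
        rw [hW, Matrix.conjTranspose_mul, Matrix.conjTranspose_mul]
        simp only [Matrix.conjTranspose_conjTranspose, Matrix.diagonal_conjTranspose]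
        have : star (fun i => ((g i : ℝ) : ℂ)) = fun i => ((g i : ℝ) : ℂ) := by
          funext i; simp [Pi.star_apply]
        rw [this]; noncomm_ring
      rw [hWH, Matrix.mul_assoc]
    rw [eC]
    have : (W * (Mᴴ * M)).trace = (diagonal (fun i => ((lam i : ℝ) : ℂ)) * diagonal (fun i => (g i : ℂ))).trace := by
      rw [hW]
      calc (V * diagonal (fun i => (g i : ℂ)) * Vᴴ * (Mᴴ * M)).trace
          = ((V * diagonal (fun i => (g i : ℂ))) * (Vᴴ * (Mᴴ * M))).trace := by noncomm_ring
        _ = ((Vᴴ * (Mᴴ * M)) * (V * diagonal (fun i => (g i : ℂ)))).trace := Matrix.trace_mul_comm _ _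
        _ = ((Vᴴ * (Mᴴ * M) * V) * diagonal (fun i => (g i : ℂ))).trace := by noncomm_ring
        _ = _ := by
            rw [← Matrix.star_eq_conjTranspose V, hdiag]
    rw [this, Matrix.diagonal_mul_diagonal, Matrix.trace_diagonal, Complex.re_sum,
      traceNorm_eq_sum_sqrt]
    refine Finset.sum_congr rfl fun i _ => ?_
    by_cases hi : lam i = 0
    · simp [hg, hi, ← hlam]
    · have hpos : 0 < lam i := lt_of_le_of_ne (hlam0 i) (Ne.symm hi)
      have hs : Real.sqrt (lam i) ≠ 0 := by positivity
      have hs : Real.sqrt (lam i) ≠ 0 := by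
        simp only [ne_eq, Real.sqrt_eq_zero', not_le]
        exact lt_of_le_of_ne (hlam0 i) (Ne.symm hi)
      have hr : lam i * (Real.sqrt (lam i))⁻¹ = Real.sqrt (lam i) := by
        nth_rewrite 1 [← Real.mul_self_sqrt (hlam0 i)]
        field_simp
      simp only [hg, hi, if_false]
      rw [← Complex.ofReal_mul, Complex.ofReal_re, hr]

end MDAux

namespace MDAux
variable {n : Type*} [Fintype n] [DecidableEq n]

lemma traceNorm_add_le (A B : Matrix n n ℂ) :
    traceNorm (A + B) ≤ traceNorm A + traceNorm B := by
  obtain ⟨C, hC, hval⟩ := attain (A + B)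
  rw [← hval, Matrix.mul_add, Matrix.trace_add, Complex.add_re]
  exact add_le_add (dual_le A C hC) (dual_le B C hC)

lemma vnorm_mulVec_le (C : Matrix n n ℂ) (hC : IsCtr C) (b : n → ℂ) :
    vnorm (C *ᵥ b) ≤ vnorm b := Real.sqrt_le_sqrt (hC b)

lemma vnorm_nonneg (a : n → ℂ) : 0 ≤ vnorm a := Real.sqrt_nonneg _

lemma traceNorm_rankOne_le (a b : n → ℂ) :
    traceNorm (Matrix.of fun i j => a i * star (b j)) ≤ vnorm a * vnorm b := by
  obtain ⟨C, hC, hval⟩ := attain (Matrix.of fun i j => a i * star (b j))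
  rw [← hval]
  have e : (Cᴴ * (Matrix.of fun i j => a i * star (b j))).trace
      = ∑ k, (starRingEnd ℂ) ((C *ᵥ b) k) * a k := by
    rw [trace_conjT_mul, Finset.sum_comm]
    refine Finset.sum_congr rfl fun k _ => ?_
    simp only [Matrix.of_apply, mulVec, dotProduct, map_sum, Complex.star_def]
    rw [Finset.sum_mul]
    refine Finset.sum_congr rfl fun i _ => ?_
    rw [_root_.map_mul]
    ring
  rw [e]
  calc (∑ k, (starRingEnd ℂ) ((C *ᵥ b) k) * a k).re
      ≤ ‖∑ k, (starRingEnd ℂ) ((C *ᵥ b) k) * a k‖ := Complex.re_le_norm _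
    _ ≤ vnorm (C *ᵥ b) * vnorm a := abs_sum_conj_mul_le _ _
    _ ≤ vnorm b * vnorm a :=
        mul_le_mul_of_nonneg_right (vnorm_mulVec_le C hC b) (vnorm_nonneg a)
    _ = vnorm a * vnorm b := mul_comm _ _

lemma traceNorm_ptraceE_le {dS dE : ℕ} (M : Matrix (Fin dS × Fin dE) (Fin dS × Fin dE) ℂ) :
    traceNorm (ptraceE M) ≤ traceNorm M := by
  obtain ⟨C, hC, hval⟩ := attain (ptraceE M)
  rw [← hval]
  set C' : Matrix (Fin dS × Fin dE) (Fin dS × Fin dE) ℂ :=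
    Matrix.of fun p q => if p.2 = q.2 then C p.1 q.1 else 0 with hC'
  have hmul : ∀ (x : Fin dS × Fin dE → ℂ) (s : Fin dS) (e : Fin dE),
      (C' *ᵥ x) (s, e) = (C *ᵥ fun s' => x (s', e)) s := by
    intro x s e
    simp only [mulVec, dotProduct, hC', Matrix.of_apply]
    rw [Fintype.sum_prod_type]
    refine Finset.sum_congr rfl fun s' _ => ?_
    simp
  have hctr : IsCtr C' := by
    intro x
    calc ∑ p : Fin dS × Fin dE, Complex.normSq ((C' *ᵥ x) p)
        = ∑ e, ∑ s, Complex.normSq ((C *ᵥ fun s' => x (s', e)) s) := by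
          rw [Fintype.sum_prod_type, Finset.sum_comm]
          exact Finset.sum_congr rfl fun e _ => Finset.sum_congr rfl fun s _ => by rw [hmul]
      _ ≤ ∑ e, ∑ s, Complex.normSq (x (s, e)) := Finset.sum_le_sum fun e _ => hC _
      _ = ∑ p : Fin dS × Fin dE, Complex.normSq (x p) := by
          rw [Fintype.sum_prod_type, Finset.sum_comm]
  have hvalue : (C'ᴴ * M).trace = (Cᴴ * ptraceE M).trace := by
    rw [trace_conjT_mul, trace_conjT_mul, Fintype.sum_prod_type]
    refine Finset.sum_congr rfl fun s _ => ?_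
    calc ∑ e, ∑ q : Fin dS × Fin dE, (starRingEnd ℂ) (C' q (s, e)) * M q (s, e)
        = ∑ e, ∑ s'', (starRingEnd ℂ) (C s'' s) * M (s'', e) (s, e) := by
          refine Finset.sum_congr rfl fun e _ => ?_
          rw [Fintype.sum_prod_type]
          refine Finset.sum_congr rfl fun s'' _ => ?_
          simp only [hC', Matrix.of_apply]
          rw [Finset.sum_eq_single e]
          · simp
          · intro b _ hb
            simp [hb]
          · intro hb
            exact absurd (Finset.mem_univ e) hb
      _ = ∑ s'', (starRingEnd ℂ) (C s'' s) * (ptraceE M) s'' s := by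
          rw [Finset.sum_comm]
          refine Finset.sum_congr rfl fun s'' _ => ?_
          rw [ptraceE, Matrix.of_apply, Finset.mul_sum]
  rw [← hvalue]
  exact dual_le M C' hctr

end MDAux

namespace MDAux
variable {n : Type*} [Fintype n] [DecidableEq n]

lemma eig_le_one {X : Matrix n n ℂ} (hX : X.PosSemidef) (hX1 : (1 - X).PosSemidef) (i : n) :
    hX.1.eigenvalues i ≤ 1 := by
  set V : Matrix n n ℂ := (hX.1.eigenvectorUnitary : Matrix n n ℂ) with hV
  have hN : (Vᴴ * (1 - X) * V).PosSemidef := hX1.conjTranspose_mul_mul_same V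
  have hVV : Vᴴ * V = 1 := by
    rw [← Matrix.star_eq_conjTranspose]; exact Unitary.coe_star_mul_self _
  have hD : Vᴴ * X * V = diagonal (RCLike.ofReal ∘ hX.1.eigenvalues) := by
    rw [← Matrix.star_eq_conjTranspose]; exact hX.1.star_mul_self_mul_eq_diagonal
  have hform : Vᴴ * (1 - X) * V = 1 - diagonal (RCLike.ofReal ∘ hX.1.eigenvalues) := by
    rw [Matrix.mul_sub, Matrix.mul_one, Matrix.sub_mul, hVV, hD]
  have h2 := hN.dotProduct_mulVec_nonneg (Pi.single i 1)
  rw [hform] at h2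
  set N : Matrix n n ℂ := 1 - diagonal (RCLike.ofReal ∘ hX.1.eigenvalues) with hNdef
  have e2 : ∀ k, (N *ᵥ Pi.single i 1) k = N k i := by
    intro k
    rw [Matrix.mulVec_single]
    exact mul_one _
  have e : star (Pi.single i (1:ℂ)) ⬝ᵥ (N *ᵥ Pi.single i 1) = ((1 - hX.1.eigenvalues i : ℝ) : ℂ) := by
    have hsp : star (Pi.single i (1:ℂ)) = (Pi.single i (1:ℂ) : n → ℂ) := by
      ext k
      by_cases hk : k = i <;> simp [Pi.single_apply, hk]
    rw [hsp, single_dotProduct, one_mul, e2, hNdef, Matrix.sub_apply, Matrix.one_apply_eq,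
      Matrix.diagonal_apply_eq, Complex.ofReal_sub, Complex.ofReal_one]
    rfl
  rw [e] at h2
  have : (0:ℝ) ≤ 1 - hX.1.eigenvalues i := by exact_mod_cast h2
  linarith

lemma sqrt_sub_psd {X : Matrix n n ℂ} (hX : X.PosSemidef) (hX1 : (1 - X).PosSemidef) :
    (hX.sqrt - X).PosSemidef := by
  set V : Matrix n n ℂ := (hX.1.eigenvectorUnitary : Matrix n n ℂ) with hV
  set lam := hX.1.eigenvalues with hlam
  have hsq : hX.sqrt = V * diagonal ((↑) ∘ Real.sqrt ∘ lam) * Vᴴ := by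
    rw [Matrix.PosSemidef.sqrt, Matrix.star_eq_conjTranspose]
    rfl
  have hx : X = V * diagonal (RCLike.ofReal ∘ lam) * Vᴴ := by
    conv_lhs => rw [hX.1.spectral_theorem]
    rw [Unitary.conjStarAlgAut_apply, Matrix.star_eq_conjTranspose]
  have hdiff : hX.sqrt - X
      = V * diagonal (fun i => ((Real.sqrt (lam i) - lam i : ℝ) : ℂ)) * Vᴴ := by
    rw [hsq]
    nth_rewrite 1 [hx]
    rw [← Matrix.sub_mul, ← Matrix.mul_sub, Matrix.diagonal_sub]
    congr 2
    funext j
    simp [Function.comp, Complex.ofReal_sub]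
  rw [hdiff]
  refine Matrix.PosSemidef.mul_mul_conjTranspose_same ?_ V
  refine Matrix.posSemidef_diagonal_iff.mpr fun j => ?_
  rw [Complex.zero_le_real]
  have h0 : 0 ≤ lam j := hX.eigenvalues_nonneg j
  have h1 : lam j ≤ 1 := eig_le_one hX hX1 j
  nlinarith [Real.sq_sqrt h0, Real.sqrt_nonneg (lam j), Real.sqrt_le_one.mpr h1]

end MDAux

open MDAux in
/-- For a POVM element `0 ≤ X ≤ 𝟙` and unit `φ`, with `|φ̃⟩ = √X |φ⟩`:
`‖Tr_E |φ⟩⟨φ| − Tr_E |φ̃⟩⟨φ̃|‖₁ ≤ 2√(1 − ⟨φ|X|φ⟩)`. -/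
theorem measurement_disturbance (dS dE : ℕ)
    (X : Matrix (Fin dS × Fin dE) (Fin dS × Fin dE) ℂ)
    (hX : X.PosSemidef) (hX1 : (1 - X).PosSemidef)
    (phi : Fin dS × Fin dE → ℂ) (hphi : vnorm phi = 1) :
    traceNorm (ptraceE (outer phi) - ptraceE (outer (hX.sqrt.mulVec phi)))
      ≤ 2 * Real.sqrt (1 - (cinner phi (X.mulVec phi)).re) := by
  set S := hX.sqrt with hS
  set psi : Fin dS × Fin dE → ℂ := S *ᵥ phi with hpsi
  set t : ℝ := (cinner phi (X *ᵥ phi)).re with ht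
  set delta : Fin dS × Fin dE → ℂ := fun i => phi i - psi i with hdelta
  have hdot : ∀ (u : Fin dS × Fin dE → ℂ),
      star u ⬝ᵥ u = ((∑ i, Complex.normSq (u i) : ℝ) : ℂ) := fun u => by
    rw [← conj_mul_self_sum]
    simp [dotProduct, Pi.star_apply, Complex.star_def]
  have hphi2 : ∑ i, Complex.normSq (phi i) = 1 := by
    have h0 : 0 ≤ ∑ i, Complex.normSq (phi i) :=
      Finset.sum_nonneg fun i _ => Complex.normSq_nonneg _
    have h1 : Real.sqrt (∑ i, Complex.normSq (phi i)) = 1 := hphi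
    nlinarith [Real.mul_self_sqrt h0]
  have hcinner_eq : cinner phi (X *ᵥ phi) = star phi ⬝ᵥ (X *ᵥ phi) := by
    simp [cinner, dotProduct, Pi.star_apply]
  have hSS : Sᴴ * S = X := by
    rw [hS, hX.posSemidef_sqrt.1]
    exact hX.sqrt_mul_self
  have hpsi2 : ∑ i, Complex.normSq (psi i) = t := by
    rw [hpsi, normSq_mulVec, hSS, ht, hcinner_eq]
  have ht1 : t ≤ 1 := by
    have h0 := hX1.re_dotProduct_nonneg phi
    rw [Matrix.sub_mulVec, dotProduct_sub, map_sub, Matrix.one_mulVec, hdot phi,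
      hphi2] at h0
    simp only [RCLike.re_to_complex, Complex.ofReal_one, Complex.one_re] at h0
    rw [ht, hcinner_eq]
    linarith
  have htu : t ≤ (star phi ⬝ᵥ (S *ᵥ phi)).re := by
    have h0 := (sqrt_sub_psd hX hX1).re_dotProduct_nonneg phi
    rw [Matrix.sub_mulVec, dotProduct_sub, map_sub] at h0
    simp only [RCLike.re_to_complex] at h0
    rw [← hS] at h0
    rw [ht, hcinner_eq]
    linarith
  have hdelta2 : ∑ i, Complex.normSq (delta i) ≤ 1 - t := by
    have expand : ∑ i, Complex.normSq (delta i)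
        = 1 + t - 2 * (star phi ⬝ᵥ psi).re := by
      rw [Finset.sum_congr rfl fun i _ => Complex.normSq_sub (phi i) (psi i)]
      rw [Finset.sum_sub_distrib, Finset.sum_add_distrib, hphi2, hpsi2]
      have hconj : (∑ i, phi i * (starRingEnd ℂ) (psi i)) = (starRingEnd ℂ) (star phi ⬝ᵥ psi) := by
        simp only [dotProduct, map_sum, Pi.star_apply, Complex.star_def]
        refine Finset.sum_congr rfl fun i _ => ?_
        rw [_root_.map_mul, Complex.conj_conj]
      have : ∑ i, 2 * (phi i * (starRingEnd ℂ) (psi i)).re = 2 * (star phi ⬝ᵥ psi).re := by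
        rw [← Finset.mul_sum, ← Complex.re_sum, hconj, Complex.conj_re]
      rw [this]
    rw [expand]
    have := htu
    rw [← hpsi] at this
    linarith
  have hdnorm : vnorm delta ≤ Real.sqrt (1 - t) := Real.sqrt_le_sqrt hdelta2
  have hpsinorm : vnorm psi ≤ 1 := by
    rw [vnorm, hpsi2]
    exact Real.sqrt_le_one.mpr ht1
  have hsplit : outer phi - outer psi
      = (Matrix.of fun i j => phi i * star (delta j))
        + (Matrix.of fun i j => delta i * star (psi j)) := by
    ext i j
    simp only [outer, Matrix.sub_apply, Matrix.add_apply, Matrix.of_apply, hdelta,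
      Complex.star_def, map_sub]
    ring
  have hpt : ptraceE (outer phi) - ptraceE (outer psi) = ptraceE (outer phi - outer psi) := by
    ext s s'
    simp [ptraceE, Matrix.sub_apply, Finset.sum_sub_distrib]
  calc traceNorm (ptraceE (outer phi) - ptraceE (outer psi))
      = traceNorm (ptraceE (outer phi - outer psi)) := by rw [hpt]
    _ ≤ traceNorm (outer phi - outer psi) := traceNorm_ptraceE_le _
    _ = traceNorm ((Matrix.of fun i j => phi i * star (delta j))
          + (Matrix.of fun i j => delta i * star (psi j))) := by rw [hsplit]
    _ ≤ traceNorm (Matrix.of fun i j => phi i * star (delta j))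
          + traceNorm (Matrix.of fun i j => delta i * star (psi j)) := traceNorm_add_le _ _
    _ ≤ vnorm phi * vnorm delta + vnorm delta * vnorm psi :=
        add_le_add (traceNorm_rankOne_le _ _) (traceNorm_rankOne_le _ _)
    _ ≤ 1 * vnorm delta + vnorm delta * 1 := by
        rw [hphi]
        exact add_le_add le_rfl (mul_le_mul_of_nonneg_left hpsinorm (vnorm_nonneg _))
    _ = 2 * vnorm delta := by ring
    _ ≤ 2 * Real.sqrt (1 - t) := by linarith [hdnorm]
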